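/- Let (Σ, A, X, L, l₀, Δ) be a register automaton, l ∈ L, u, v : X → Σ valuations, and f a CTL(X, L) formula. If u ∼_C v, then ⟨l, u⟩ ⊨ f if and only if ⟨l, v⟩ ⊨ f. -/

import Mathlib

/-- A term over registers `X`, formal parameters `p₁,…,pₙ`, and constants from the alphabet. -/
inductive Term (X Sig : Type) (n : ℕ) where
  | reg (x : X)
  | par (i : Fin n)
  | const (c : Sig)

/-- The value of a term under a register valuation `v` and parameter valuation `d`. -/
def Term.val {X Sig : Type} {n : ℕ} (v : X → Sig) (d : Fin n → Sig) : Term X Sig n → Sig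
  | .reg x => v x
  | .par i => d i
  | .const c => c

/-- All constants occurring in the term belong to `C`. -/
def Term.ConstIn {X Sig : Type} {n : ℕ} (C : Finset Sig) : Term X Sig n → Prop
  | .const c => c ∈ C
  | _ => True

/-- An atomic guard: an equality `e = f` or a disequality `e ≠ f` between terms. -/
inductive Atom (X Sig : Type) (n : ℕ) where
  | eq (e f : Term X Sig n)
  | ne (e f : Term X Sig n)

/-- Satisfaction of an atomic guard. -/
def Atom.Sat {X Sig : Type} {n : ℕ} (v : X → Sig) (d : Fin n → Sig) : Atom X Sig n → Prop
  | .eq e f => Term.val v d e = Term.val v d f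
  | .ne e f => Term.val v d e ≠ Term.val v d f

def Atom.ConstIn {X Sig : Type} {n : ℕ} (C : Finset Sig) : Atom X Sig n → Prop
  | .eq e f => Term.ConstIn C e ∧ Term.ConstIn C f
  | .ne e f => Term.ConstIn C e ∧ Term.ConstIn C f

/-- A guard is a finite conjunction of atomic guards. -/
abbrev Guard (X Sig : Type) (n : ℕ) : Type := List (Atom X Sig n)

/-- `v, d ⊨ g`: every conjunct of the guard holds. -/
def Guard.Sat {X Sig : Type} {n : ℕ} (v : X → Sig) (d : Fin n → Sig) (g : Guard X Sig n) : Prop :=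
  ∀ a ∈ g, Atom.Sat v d a

def Guard.ConstIn {X Sig : Type} {n : ℕ} (C : Finset Sig) (g : Guard X Sig n) : Prop :=
  ∀ a ∈ g, Atom.ConstIn C a

/-- An assignment `(x_{k_1} … x_{k_m}) ↦ (e_{l_1} … e_{l_m})`, as a list of pairs. -/
abbrev Assignment (X Sig : Type) (n : ℕ) : Type := List (X × Term X Sig n)

/-- The assigned registers are pairwise distinct. -/
def Assignment.Wf {X Sig : Type} {n : ℕ} (π : Assignment X Sig n) : Prop :=
  (List.map Prod.fst π).Nodup

/-- `⟦π⟧_{v,d}`: the set of valuations `v'` with `v' (x_{k_i})` the value of `e_{l_i}` under `(v,d)`. -/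
def Assignment.Sem {X Sig : Type} {n : ℕ} (π : Assignment X Sig n) (v : X → Sig)
    (d : Fin n → Sig) : Set (X → Sig) :=
  {v' | ∀ p ∈ π, v' p.1 = Term.val v d p.2}

def Assignment.ConstIn {X Sig : Type} {n : ℕ} (C : Finset Sig) (π : Assignment X Sig n) : Prop :=
  ∀ p ∈ π, Term.ConstIn C (p.2 : Term X Sig n)
/-- `u ∼_C v`: there is an automorphism (bijection) of the alphabet which is invariant on the
constants `C` and maps `u` to `v` pointwise. -/
def EquivC {X Sig : Type} (C : Finset Sig) (u v : X → Sig) : Prop :=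
  ∃ σ : Equiv.Perm Sig, (∀ c ∈ C, σ c = c) ∧ ∀ x, σ (u x) = v x

/-- `[v]`: the `∼_C` equivalence class of the valuation `v`. -/
def eqClass {X Sig : Type} (C : Finset Sig) (v : X → Sig) : Set (X → Sig) :=
  {u | EquivC C u v}
/-- A transition `(l, α, g, π, l')` of a register automaton. -/
structure Transition (Sig X A L : Type) (arity : A → ℕ) where
  src : L
  act : A
  guard : Guard X Sig (arity act)
  assign : Assignment X Sig (arity act)
  tgt : L

def Transition.ConstIn {Sig X A L : Type} {arity : A → ℕ} (C : Finset Sig)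
    (t : Transition Sig X A L arity) : Prop :=
  Guard.ConstIn C t.guard ∧ Assignment.ConstIn C t.assign

/-- A register automaton `(Σ, A, X, L, l₀, Δ)` over constants `C`: each action has an arity,
there is an initial location, and a finite set of transitions whose guards and assignments
only mention constants of `C` and assign pairwise distinct registers. -/
structure RegisterAutomaton (Sig X A L : Type) (C : Finset Sig) where
  arity : A → ℕ
  init : L
  Δ : Set (Transition Sig X A L arity)
  finΔ : Δ.Finite
  wf : ∀ t ∈ Δ, Transition.ConstIn C t ∧ Assignment.Wf t.assign

/-- `⟨l, v⟩ →^{α(d)} ⟨l', v'⟩`: some transition `(l, α, g, π, l') ∈ Δ` satisfies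
`v, d ⊨ g` and `v' ∈ ⟦π⟧_{v,d}`. -/
def RegisterAutomaton.Step {Sig X A L : Type} {C : Finset Sig}
    (RA : RegisterAutomaton Sig X A L C) (l : L) (v : X → Sig) (α : A)
    (d : Fin (RA.arity α) → Sig) (l' : L) (v' : X → Sig) : Prop :=
  ∃ (g : Guard X Sig (RA.arity α)) (π : Assignment X Sig (RA.arity α)),
    (⟨l, α, g, π, l'⟩ : Transition Sig X A L RA.arity) ∈ RA.Δ ∧
      Guard.Sat v d g ∧ v' ∈ Assignment.Sem π v d

/-- One step on configurations, for some data symbol `α(d)`. -/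
def RegisterAutomaton.StepAny {Sig X A L : Type} {C : Finset Sig}
    (RA : RegisterAutomaton Sig X A L C) (c c' : L × (X → Sig)) : Prop :=
  ∃ (α : A) (d : Fin (RA.arity α) → Sig), RA.Step c.1 c.2 α d c'.1 c'.2

/-- A configuration `⟨l, v⟩` is reachable: there is a run from the initial location
(with an arbitrary initial valuation) ending in `⟨l, v⟩`. -/
def RegisterAutomaton.Reachable {Sig X A L : Type} {C : Finset Sig}
    (RA : RegisterAutomaton Sig X A L C) (l : L) (v : X → Sig) : Prop :=
  ∃ v₀ : X → Sig, Relation.ReflTransGen RA.StepAny (RA.init, v₀) (l, v)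

/-- `⟨l, S⟩ ⇝ ⟨l', S'⟩` for sets of valuations (representative configurations):
every member of `S` steps to some member of `S'` and vice versa. -/
def RegisterAutomaton.RepStep {Sig X A L : Type} {C : Finset Sig}
    (RA : RegisterAutomaton Sig X A L C) (l : L) (S : Set (X → Sig)) (l' : L)
    (S' : Set (X → Sig)) : Prop :=
  (∀ u ∈ S, ∃ u' ∈ S', ∃ (α : A) (d : Fin (RA.arity α) → Sig), RA.Step l u α d l' u') ∧
  (∀ u' ∈ S', ∃ u ∈ S, ∃ (α : A) (d : Fin (RA.arity α) → Sig), RA.Step l u α d l' u')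
/-- CTL(X, L) formulas. -/
inductive CTL (X Sig L : Type) where
  | loc (l : L)
  | eqReg (x y : X)
  | eqConst (x : X) (c : Sig)
  | not (f : CTL X Sig L)
  | and (f₀ f₁ : CTL X Sig L)
  | EX (f : CTL X Sig L)
  | EU (f₀ f₁ : CTL X Sig L)
  | EG (f : CTL X Sig L)

/-- Every constant appearing in the formula belongs to `C`. -/
def CTL.ConstIn {X Sig L : Type} (C : Finset Sig) : CTL X Sig L → Prop
  | .eqConst _ c => c ∈ C
  | .not f => CTL.ConstIn C f
  | .and f₀ f₁ => CTL.ConstIn C f₀ ∧ CTL.ConstIn C f₁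
  | .EX f => CTL.ConstIn C f
  | .EU f₀ f₁ => CTL.ConstIn C f₀ ∧ CTL.ConstIn C f₁
  | .EG f => CTL.ConstIn C f
  | _ => True

/-- `⟨l, v⟩ ⊨ f`: CTL(X, L) satisfaction over a register automaton. -/
def RegisterAutomaton.Sat {Sig X A L : Type} {C : Finset Sig}
    (RA : RegisterAutomaton Sig X A L C) : CTL X Sig L → L × (X → Sig) → Prop
  | .loc l', c => c.1 = l'
  | .eqReg x y, c => c.2 x = c.2 y
  | .eqConst x cst, c => c.2 x = cst
  | .not f, c => ¬ RA.Sat f c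
  | .and f₀ f₁, c => RA.Sat f₀ c ∧ RA.Sat f₁ c
  | .EX f, c => ∃ c', RA.StepAny c c' ∧ RA.Sat f c'
  | .EU f₀ f₁, c => ∃ (k : ℕ) (p : ℕ → L × (X → Sig)), p 0 = c ∧
      (∀ i < k, RA.StepAny (p i) (p (i + 1))) ∧
      RA.Sat f₁ (p k) ∧ (∀ i < k, RA.Sat f₀ (p i))
  | .EG f, c => ∃ p : ℕ → L × (X → Sig), p 0 = c ∧
      (∀ i, RA.StepAny (p i) (p (i + 1))) ∧ (∀ i, RA.Sat f (p i))
section Aux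

variable {Sig X A L : Type} {C : Finset Sig}

lemma term_val_equivariant {n : ℕ} (σ : Equiv.Perm Sig) (hσ : ∀ c ∈ C, σ c = c)
    (w : X → Sig) (d : Fin n → Sig) (e : Term X Sig n) (he : Term.ConstIn C e) :
    Term.val (σ ∘ w) (σ ∘ d) e = σ (Term.val w d e) := by
  cases e with
  | reg x => rfl
  | par i => rfl
  | const c => exact (hσ c he).symm

lemma step_equivariant (RA : RegisterAutomaton Sig X A L C)
    (σ : Equiv.Perm Sig) (hσ : ∀ c ∈ C, σ c = c) {l l' : L} {α : A}
    {d : Fin (RA.arity α) → Sig} {w w' : X → Sig}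
    (h : RA.Step l w α d l' w') : RA.Step l (σ ∘ w) α (σ ∘ d) l' (σ ∘ w') := by
  obtain ⟨g, π, hΔ, hg, hsem⟩ := h
  obtain ⟨⟨hgC, hπC⟩, -⟩ := RA.wf _ hΔ
  refine ⟨g, π, hΔ, ?_, ?_⟩
  · intro a ha
    have hC := hgC a ha
    have hs := hg a ha
    cases a with
    | eq e f =>
        simp only [Atom.Sat] at hs ⊢
        rw [term_val_equivariant σ hσ w d e hC.1, term_val_equivariant σ hσ w d f hC.2, hs]
    | ne e f =>
        simp only [Atom.Sat] at hs ⊢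
        rw [term_val_equivariant σ hσ w d e hC.1, term_val_equivariant σ hσ w d f hC.2]
        exact fun hc => hs (σ.injective hc)
  · intro p hp
    have := hsem p hp
    simp only [Function.comp_apply, this,
      term_val_equivariant σ hσ w d p.2 (hπC p hp)]

lemma stepAny_equivariant (RA : RegisterAutomaton Sig X A L C)
    (σ : Equiv.Perm Sig) (hσ : ∀ c ∈ C, σ c = c) {c c' : L × (X → Sig)}
    (h : RA.StepAny c c') : RA.StepAny (c.1, σ ∘ c.2) (c'.1, σ ∘ c'.2) := by
  obtain ⟨α, d, hs⟩ := h
  exact ⟨α, σ ∘ d, step_equivariant RA σ hσ hs⟩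

lemma sat_equivariant (RA : RegisterAutomaton Sig X A L C) (f : CTL X Sig L) :
    CTL.ConstIn C f → ∀ (σ : Equiv.Perm Sig), (∀ c ∈ C, σ c = c) →
      ∀ c, RA.Sat f c → RA.Sat f (c.1, σ ∘ c.2) := by
  induction f with
  | loc l' => intro _ σ hσ c h; exact h
  | eqReg x y => intro _ σ hσ c h;
                 simpa only [RegisterAutomaton.Sat, Function.comp_apply] using congrArg σ h
  | eqConst x cst =>
      intro hf σ hσ c h
      simp only [RegisterAutomaton.Sat, Function.comp_apply] at h ⊢
      rw [h]; exact hσ cst hf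
  | not f ih =>
      intro hf σ hσ c h hcon
      apply h
      have := ih hf σ⁻¹ (fun c hc => by
        have := hσ c hc; exact σ.injective (by simp [this])) _ hcon
      have heq : (⇑(Equiv.symm σ) ∘ ⇑σ ∘ c.2) = c.2 := funext fun x => by simp
      simpa [heq] using this
  | and f₀ f₁ ih₀ ih₁ =>
      intro hf σ hσ c h
      exact ⟨ih₀ hf.1 σ hσ c h.1, ih₁ hf.2 σ hσ c h.2⟩
  | EX f ih =>
      intro hf σ hσ c h
      obtain ⟨c', hs, hsat⟩ := h
      exact ⟨(c'.1, σ ∘ c'.2), stepAny_equivariant RA σ hσ hs, ih hf σ hσ c' hsat⟩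
  | EU f₀ f₁ ih₀ ih₁ =>
      intro hf σ hσ c h
      obtain ⟨k, p, hp0, hstep, hsat1, hsat0⟩ := h
      refine ⟨k, fun i => ((p i).1, σ ∘ (p i).2), by simp only []; rw [hp0], ?_, ?_, ?_⟩
      · intro i hi; exact stepAny_equivariant RA σ hσ (hstep i hi)
      · exact ih₁ hf.2 σ hσ _ hsat1
      · intro i hi; exact ih₀ hf.1 σ hσ _ (hsat0 i hi)
  | EG f ih =>
      intro hf σ hσ c h
      obtain ⟨p, hp0, hstep, hsat⟩ := h
      refine ⟨fun i => ((p i).1, σ ∘ (p i).2), by simp only []; rw [hp0], ?_, ?_⟩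
      · intro i; exact stepAny_equivariant RA σ hσ (hstep i)
      · intro i; exact ih hf σ hσ _ (hsat i)

end Aux

/-- Any two configurations with `∼_C`-equivalent valuations satisfy the same CTL(X, L)
formulas: if `u ∼_C v` then `⟨l, u⟩ ⊨ f` iff `⟨l, v⟩ ⊨ f`. -/

theorem ctl_sat_invariant {Sig X A L : Type} [Infinite Sig] [Finite X] [Finite A] [Finite L]
    {C : Finset Sig} (RA : RegisterAutomaton Sig X A L C) (l : L) (u v : X → Sig)
    (f : CTL X Sig L) (hf : CTL.ConstIn C f) (huv : EquivC C u v) :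
    RA.Sat f (l, u) ↔ RA.Sat f (l, v) := by
  obtain ⟨σ, hσC, hσu⟩ := huv
  have hv : v = ⇑σ ∘ u := funext fun x => (hσu x).symm
  have hσC' : ∀ c ∈ C, σ⁻¹ c = c := fun c hc => σ.injective (by simp [hσC c hc])
  constructor
  · intro h
    have := sat_equivariant RA f hf σ hσC (l, u) h
    simpa [hv] using this
  · intro h
    have := sat_equivariant RA f hf σ⁻¹ hσC' (l, v) h
    have hu : ⇑(Equiv.symm σ) ∘ v = u := funext fun x => by simp [hv]
    simpa [hu] using this
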